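/- Data processing inequality for negative-order Sibson mutual information (second leg): if X - Y - Z is a Markov chain of finite random variables with strictly positive joint distribution, then for α < 0, I_α(X,Z) ≤ I_α(X,Y), where I_α(U,V) = -max_{q_V} D_α(p_{UV} ‖ p_U ⊗ q_V). -/

import Mathlib

open Real Finset

/-- Reverse Hölder inequality for exponent `p ∈ (0,1)` with conjugate `q < 0`. -/
private lemma rev_holder {ι : Type*} (s : Finset ι)
    (f g : ι → ℝ) (hf : ∀ i ∈ s, 0 < f i) (hg : ∀ i ∈ s, 0 < g i)
    {p q : ℝ} (hp0 : 0 < p) (hp1 : p < 1) (hpq : 1/p + 1/q = 1) :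
    (∑ i ∈ s, f i ^ p) ^ (1/p) * (∑ i ∈ s, g i ^ q) ^ (1/q) ≤ ∑ i ∈ s, f i * g i := by
  rcases s.eq_empty_or_nonempty with rfl | hs
  · simp only [Finset.sum_empty]
    rw [Real.zero_rpow (one_div_ne_zero hp0.ne'), zero_mul]
  have hpne : p ≠ 0 := hp0.ne'
  have h1p : (0:ℝ) < 1 - p := by linarith
  have h1pne : (1:ℝ) - p ≠ 0 := h1p.ne'
  have hgt : 1 < 1/p := one_lt_one_div hp0 hp1
  have hinv : 1/q = 1 - 1/p := by linarith
  have hqneg : 1/q < 0 := by linarith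
  have hqne : q ≠ 0 := fun h => by rw [h, div_zero] at hqneg; linarith
  have hpq' : q + p = p * q := by field_simp at hpq; linarith
  have hqval : -p * (1/(1-p)) = q := by
    rw [mul_one_div, div_eq_iff h1pne]
    nlinarith [hpq']
  have hPQ : Real.HolderConjugate (1/p) (1/(1-p)) := by
    rw [Real.holderConjugate_iff]
    constructor
    · exact hgt
    · rw [one_div, one_div, inv_inv, inv_inv]; ring
  have key := Real.inner_le_Lp_mul_Lq_of_nonneg (s := s)
      (f := fun i => f i ^ p * g i ^ p) (g := fun i => g i ^ (-p)) hPQ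
      (fun i hi => (mul_pos (Real.rpow_pos_of_pos (hf i hi) _)
        (Real.rpow_pos_of_pos (hg i hi) _)).le)
      (fun i hi => (Real.rpow_pos_of_pos (hg i hi) _).le)
  have e1 : ∑ i ∈ s, (f i ^ p * g i ^ p) * g i ^ (-p) = ∑ i ∈ s, f i ^ p := by
    refine sum_congr rfl fun i hi => ?_
    rw [mul_assoc, ← Real.rpow_add (hg i hi)]
    simp
  have e2 : ∑ i ∈ s, (f i ^ p * g i ^ p) ^ (1/p) = ∑ i ∈ s, f i * g i := by
    refine sum_congr rfl fun i hi => ?_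
    rw [Real.mul_rpow (Real.rpow_nonneg (hf i hi).le _) (Real.rpow_nonneg (hg i hi).le _),
      ← Real.rpow_mul (hf i hi).le, ← Real.rpow_mul (hg i hi).le,
      mul_one_div_cancel hpne, Real.rpow_one, Real.rpow_one]
  have e3 : ∑ i ∈ s, (g i ^ (-p)) ^ (1/(1-p)) = ∑ i ∈ s, g i ^ q := by
    refine sum_congr rfl fun i hi => ?_
    rw [← Real.rpow_mul (hg i hi).le, hqval]
  rw [e1, e2, e3] at key
  rw [one_div_one_div, one_div_one_div] at key
  have hA : 0 < ∑ i ∈ s, f i ^ p :=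
    sum_pos (fun i hi => Real.rpow_pos_of_pos (hf i hi) _) hs
  have hB : 0 < ∑ i ∈ s, g i ^ q :=
    sum_pos (fun i hi => Real.rpow_pos_of_pos (hg i hi) _) hs
  have hC : 0 < ∑ i ∈ s, f i * g i :=
    sum_pos (fun i hi => mul_pos (hf i hi) (hg i hi)) hs
  have h1 : (∑ i ∈ s, f i ^ p) ^ (1/p)
      ≤ ((∑ i ∈ s, f i * g i) ^ p * (∑ i ∈ s, g i ^ q) ^ (1-p)) ^ (1/p) :=
    Real.rpow_le_rpow hA.le key (by positivity)
  have h2 : ((∑ i ∈ s, f i * g i) ^ p * (∑ i ∈ s, g i ^ q) ^ (1-p)) ^ (1/p)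
      = (∑ i ∈ s, f i * g i) * (∑ i ∈ s, g i ^ q) ^ ((1-p) * (1/p)) := by
    rw [Real.mul_rpow (Real.rpow_nonneg hC.le _) (Real.rpow_nonneg hB.le _),
      ← Real.rpow_mul hC.le, ← Real.rpow_mul hB.le, mul_one_div_cancel hpne, Real.rpow_one]
  have hexp : (1-p) * (1/p) + 1/q = 0 := by
    rw [sub_mul, one_mul, mul_one_div_cancel hpne]; linarith
  calc (∑ i ∈ s, f i ^ p) ^ (1/p) * (∑ i ∈ s, g i ^ q) ^ (1/q)
      ≤ ((∑ i ∈ s, f i * g i) * (∑ i ∈ s, g i ^ q) ^ ((1-p) * (1/p)))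
          * (∑ i ∈ s, g i ^ q) ^ (1/q) :=
        mul_le_mul_of_nonneg_right (h1.trans_eq h2) (Real.rpow_nonneg hB.le _)
    _ = (∑ i ∈ s, f i * g i) * (∑ i ∈ s, g i ^ q) ^ ((1-p) * (1/p) + 1/q) := by
        rw [mul_assoc, ← Real.rpow_add hB]
    _ = ∑ i ∈ s, f i * g i := by rw [hexp, Real.rpow_zero, mul_one]

/-- Data processing inequality for negative-order Sibson mutual information:
if `X - Y - Z` is a Markov chain with strictly positive joint pmf, then for `α < 0`,
`I_α(X,Z) ≤ I_α(X,Y)`. -/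
theorem sibson_neg_order_data_processing
    {X Y Z : Type*} [Fintype X] [Fintype Y] [Fintype Z]
    (p : X × Y × Z → ℝ) (hp : ∀ w, 0 < p w) (hp1 : ∑ w, p w = 1)
    (pX : X → ℝ) (hpX : ∀ x, pX x = ∑ y, ∑ z, p (x, y, z))
    (pY : Y → ℝ) (hpY : ∀ y, pY y = ∑ x, ∑ z, p (x, y, z))
    (pXY : X × Y → ℝ) (hpXY : ∀ x y, pXY (x, y) = ∑ z, p (x, y, z))
    (pYZ : Y × Z → ℝ) (hpYZ : ∀ y z, pYZ (y, z) = ∑ x, p (x, y, z))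
    (pXZ : X × Z → ℝ) (hpXZ : ∀ x z, pXZ (x, z) = ∑ y, p (x, y, z))
    (hmarkov : ∀ x y z, p (x, y, z) * pY y = pXY (x, y) * pYZ (y, z))
    (α : ℝ) (hα : α < 0) :
    (α / (1 - α)) *
        Real.log (∑ z, (∑ x, (pXZ (x, z) / pX x) ^ α * pX x) ^ (1 / α))
      ≤ (α / (1 - α)) *
        Real.log (∑ y, (∑ x, (pXY (x, y) / pX x) ^ α * pX x) ^ (1 / α)) := by
  classical
  have hαne : α ≠ 0 := hα.ne
  have hne : Nonempty (X × Y × Z) := by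
    by_contra h
    rw [not_nonempty_iff] at h
    rw [Finset.univ_eq_empty, Finset.sum_empty] at hp1
    exact zero_ne_one hp1
  obtain ⟨⟨x0, y0, z0⟩⟩ := hne
  haveI : Nonempty X := ⟨x0⟩
  haveI : Nonempty Y := ⟨y0⟩
  haveI : Nonempty Z := ⟨z0⟩
  have hpXpos : ∀ x, 0 < pX x := fun x => by
    rw [hpX x]
    exact sum_pos (fun y _ => sum_pos (fun z _ => hp _) univ_nonempty) univ_nonempty
  have hpYpos : ∀ y, 0 < pY y := fun y => by
    rw [hpY y]
    exact sum_pos (fun x _ => sum_pos (fun z _ => hp _) univ_nonempty) univ_nonempty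
  have hpXYpos : ∀ x y, 0 < pXY (x, y) := fun x y => by
    rw [hpXY]; exact sum_pos (fun z _ => hp _) univ_nonempty
  have hpYZpos : ∀ y z, 0 < pYZ (y, z) := fun y z => by
    rw [hpYZ]; exact sum_pos (fun x _ => hp _) univ_nonempty
  have hpXZpos : ∀ x z, 0 < pXZ (x, z) := fun x z => by
    rw [hpXZ]; exact sum_pos (fun y _ => hp _) univ_nonempty
  have hdecomp : ∀ x z, pXZ (x, z) = ∑ y, pYZ (y, z) / pY y * pXY (x, y) := by
    intro x z
    rw [hpXZ]
    refine sum_congr rfl fun y _ => ?_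
    rw [div_mul_eq_mul_div, eq_div_iff (hpYpos y).ne']
    rw [hmarkov x y z]; ring
  have hker : ∀ y, ∑ z, pYZ (y, z) / pY y = 1 := fun y => by
    rw [← sum_div, div_eq_one_iff_eq (hpYpos y).ne', hpY y]
    simp_rw [hpYZ]
    exact Finset.sum_comm
  set A : Y → ℝ := fun y => ∑ x, (pXY (x, y) / pX x) ^ α * pX x with hAdef
  set B : Z → ℝ := fun z => ∑ x, (pXZ (x, z) / pX x) ^ α * pX x with hBdef
  have hApos : ∀ y, 0 < A y := fun y =>
    sum_pos (fun x _ => mul_pos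
      (Real.rpow_pos_of_pos (div_pos (hpXYpos x y) (hpXpos x)) _) (hpXpos x)) univ_nonempty
  have hBpos : ∀ z, 0 < B z := fun z =>
    sum_pos (fun x _ => mul_pos
      (Real.rpow_pos_of_pos (div_pos (hpXZpos x z) (hpXpos x)) _) (hpXpos x)) univ_nonempty
  -- exponent facts
  have hα1 : α - 1 < 0 := by linarith
  have hp0 : 0 < α / (α - 1) := div_pos_of_neg_of_neg hα hα1
  have hp1' : α / (α - 1) < 1 := by
    have h : α / (α - 1) = 1 + 1 / (α - 1) := by
      rw [one_add_div hα1.ne]; ring_nf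
    have : 1 / (α - 1) < 0 := one_div_neg.mpr hα1
    linarith
  have hdiv : (α - 1) / α + 1 / α = 1 := by
    rw [← add_div, sub_add_cancel, div_self hαne]
  have hpq : 1 / (α / (α - 1)) + 1 / α = 1 := by
    rw [one_div_div]; exact hdiv
  -- key inequality per z
  have hkey : ∀ z, ∑ y, pYZ (y, z) / pY y * A y ^ (1/α) ≤ B z ^ (1/α) := by
    intro z
    have hT : 0 < B z := hBpos z
    have hsplit : B z = ∑ y, pYZ (y, z) / pY y *
        ∑ x, (pXZ (x, z) / pX x) ^ (α - 1) * pXY (x, y) := by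
      have : B z = ∑ x, ∑ y, pYZ (y, z) / pY y *
          ((pXZ (x, z) / pX x) ^ (α - 1) * pXY (x, y)) := by
        refine sum_congr rfl fun x _ => ?_
        have hs : 0 < pXZ (x, z) / pX x := div_pos (hpXZpos x z) (hpXpos x)
        have h1 : (pXZ (x, z) / pX x) ^ α * pX x
            = (pXZ (x, z) / pX x) ^ (α - 1) * pXZ (x, z) := by
          rw [show α = (α - 1) + 1 by ring, Real.rpow_add hs, Real.rpow_one]
          rw [mul_assoc, div_mul_cancel₀ _ (hpXpos x).ne']
          ring_nf
        rw [h1]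
        calc (pXZ (x, z) / pX x) ^ (α - 1) * pXZ (x, z)
            = ∑ y, (pXZ (x, z) / pX x) ^ (α - 1) * (pYZ (y, z) / pY y * pXY (x, y)) := by
              rw [← Finset.mul_sum, ← hdecomp x z]
          _ = ∑ y, pYZ (y, z) / pY y * ((pXZ (x, z) / pX x) ^ (α - 1) * pXY (x, y)) :=
              sum_congr rfl fun y _ => by ring
      rw [this, Finset.sum_comm]
      exact sum_congr rfl fun y _ => (Finset.mul_sum _ _ _).symm
    have hyineq : ∀ y, B z ^ ((α - 1)/α) * A y ^ (1/α)
        ≤ ∑ x, (pXZ (x, z) / pX x) ^ (α - 1) * pXY (x, y) := by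
      intro y
      have hrh := rev_holder (univ : Finset X)
        (fun x => (pXZ (x, z) / pX x) ^ (α - 1) * (pX x) ^ ((α - 1)/α))
        (fun x => pXY (x, y) / pX x * (pX x) ^ (1/α))
        (fun x _ => mul_pos (Real.rpow_pos_of_pos (div_pos (hpXZpos x z) (hpXpos x)) _)
          (Real.rpow_pos_of_pos (hpXpos x) _))
        (fun x _ => mul_pos (div_pos (hpXYpos x y) (hpXpos x))
          (Real.rpow_pos_of_pos (hpXpos x) _))
        hp0 hp1' hpq
      have hα1ne : α - 1 ≠ 0 := hα1.ne
      have ef : ∑ x, ((pXZ (x, z) / pX x) ^ (α - 1) * (pX x) ^ ((α - 1)/α)) ^ (α/(α-1))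
          = B z := by
        refine sum_congr rfl fun x _ => ?_
        have hs : (0:ℝ) ≤ pXZ (x, z) / pX x := (div_pos (hpXZpos x z) (hpXpos x)).le
        rw [Real.mul_rpow (Real.rpow_nonneg hs _) (Real.rpow_nonneg (hpXpos x).le _),
          ← Real.rpow_mul hs, ← Real.rpow_mul (hpXpos x).le]
        rw [show (α - 1) * (α/(α-1)) = α by rw [mul_comm]; exact div_mul_cancel₀ _ hα1.ne,
          show (α - 1)/α * (α/(α-1)) = 1 by
            rw [div_mul_div_comm, mul_comm, div_self (mul_ne_zero hαne hα1.ne)],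
          Real.rpow_one]
      have eg : ∑ x, (pXY (x, y) / pX x * (pX x) ^ (1/α)) ^ α = A y := by
        refine sum_congr rfl fun x _ => ?_
        rw [Real.mul_rpow (div_pos (hpXYpos x y) (hpXpos x)).le
            (Real.rpow_nonneg (hpXpos x).le _),
          ← Real.rpow_mul (hpXpos x).le, one_div, inv_mul_cancel₀ hαne, Real.rpow_one]
      have efg : ∑ x, ((pXZ (x, z) / pX x) ^ (α - 1) * (pX x) ^ ((α - 1)/α))
            * (pXY (x, y) / pX x * (pX x) ^ (1/α))
          = ∑ x, (pXZ (x, z) / pX x) ^ (α - 1) * pXY (x, y) := by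
        refine sum_congr rfl fun x _ => ?_
        rw [show ((pXZ (x, z) / pX x) ^ (α - 1) * (pX x) ^ ((α - 1)/α))
              * (pXY (x, y) / pX x * (pX x) ^ (1/α))
            = (pXZ (x, z) / pX x) ^ (α - 1) * (pXY (x, y) / pX x)
              * ((pX x) ^ ((α - 1)/α) * (pX x) ^ (1/α)) by ring]
        rw [← Real.rpow_add (hpXpos x), hdiv, Real.rpow_one]
        rw [mul_assoc, div_mul_cancel₀ _ (hpXpos x).ne']
      rw [ef, eg, efg, one_div_div] at hrh
      exact hrh
    have hstep : B z ^ ((α - 1)/α) * (∑ y, pYZ (y, z) / pY y * A y ^ (1/α))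
        ≤ B z ^ ((α - 1)/α) * B z ^ (1/α) := by
      rw [← Real.rpow_add hT, hdiv, Real.rpow_one]
      calc B z ^ ((α - 1)/α) * (∑ y, pYZ (y, z) / pY y * A y ^ (1/α))
          = ∑ y, pYZ (y, z) / pY y * (B z ^ ((α - 1)/α) * A y ^ (1/α)) := by
            rw [Finset.mul_sum]; exact sum_congr rfl fun y _ => by ring
        _ ≤ ∑ y, pYZ (y, z) / pY y *
              ∑ x, (pXZ (x, z) / pX x) ^ (α - 1) * pXY (x, y) := by
            refine sum_le_sum fun y _ => ?_
            exact mul_le_mul_of_nonneg_left (hyineq y)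
              (div_pos (hpYZpos y z) (hpYpos y)).le
        _ = B z := hsplit.symm
    exact le_of_mul_le_mul_left hstep (Real.rpow_pos_of_pos hT _)
  have hsum : ∑ y, A y ^ (1/α) ≤ ∑ z, B z ^ (1/α) := by
    calc ∑ y, A y ^ (1/α) = ∑ y, ∑ z, pYZ (y, z) / pY y * A y ^ (1/α) := by
          refine sum_congr rfl fun y _ => ?_
          rw [← Finset.sum_mul, hker y, one_mul]
      _ = ∑ z, ∑ y, pYZ (y, z) / pY y * A y ^ (1/α) := Finset.sum_comm
      _ ≤ ∑ z, B z ^ (1/α) := sum_le_sum fun z _ => hkey z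
  have hSY : 0 < ∑ y, A y ^ (1/α) :=
    sum_pos (fun y _ => Real.rpow_pos_of_pos (hApos y) _) univ_nonempty
  have hlog : Real.log (∑ y, A y ^ (1/α)) ≤ Real.log (∑ z, B z ^ (1/α)) :=
    Real.log_le_log hSY hsum
  have hc : α / (1 - α) ≤ 0 :=
    le_of_lt (div_neg_of_neg_of_pos hα (by linarith))
  exact mul_le_mul_of_nonpos_left hlog hc
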